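/- Let l be a prime power, A, B ⊆ F_l^n \ {0}, and H a uniformly random invertible matrix in F_l^{n×n}. If log_l |A| = n R_1 + o(n) and log_l |B| = n R_2 + o(n) as n → ∞ with R_1 + R_2 > 1, then P(A ∩ HB = ∅) → 0 as n → ∞, where HB = {Hx : x ∈ B}. -/

import Mathlib

open Submodule Finset

section Trans
variable {F : Type*} [Field F] {V : Type*} [AddCommGroup V] [Module F V]
  [FiniteDimensional F V]

/-- transitivity of GL on linearly independent pairs -/
lemma exists_equiv_pair {v v' w w' : V} (hv : v ≠ 0) (hv' : v' ∉ span F {v})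
    (hw : w ≠ 0) (hw' : w' ∉ span F {w}) :
    ∃ H : V ≃ₗ[F] V, H v = w ∧ H v' = w' := by
  classical
  have hvv' : v' ≠ v := fun h => hv' (by rw [h]; exact mem_span_singleton_self v)
  have hww' : w' ≠ w := fun h => hw' (by rw [h]; exact mem_span_singleton_self w)
  have hs : LinearIndepOn F id (insert v' {v} : Set V) := by
    rw [linearIndepOn_id_insert (by simpa using hvv')]
    exact ⟨LinearIndepOn.singleton hv, by simpa using hv'⟩
  have ht : LinearIndepOn F id (insert w' {w} : Set V) := by
    rw [linearIndepOn_id_insert (by simpa using hww')]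
    exact ⟨LinearIndepOn.singleton hw, by simpa using hw'⟩
  set s' := hs.extend (Set.subset_univ _) with hs'def
  set t' := ht.extend (Set.subset_univ _) with ht'def
  have hss : (insert v' {v} : Set V) ⊆ s' := hs.subset_extend _
  have htt : (insert w' {w} : Set V) ⊆ t' := ht.subset_extend _
  haveI : Fintype ↥s' := (Set.toFinite s').fintype
  haveI : Fintype ↥t' := (Set.toFinite t').fintype
  have hcard : Fintype.card ↥s' = Fintype.card ↥t' := by
    rw [← Module.finrank_eq_card_basis (Module.Basis.extend hs),
      ← Module.finrank_eq_card_basis (Module.Basis.extend ht)]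
  obtain ⟨e0⟩ := Fintype.card_eq.mp hcard
  set vs : ↥s' := ⟨v, hss (by simp)⟩
  set vs' : ↥s' := ⟨v', hss (by simp)⟩
  set wt : ↥t' := ⟨w, htt (by simp)⟩
  set wt' : ↥t' := ⟨w', htt (by simp)⟩
  set e1 := e0.trans (Equiv.swap (e0 vs) wt) with he1
  set e2 := e1.trans (Equiv.swap (e1 vs') wt') with he2
  have h1 : e1 vs = wt := by simp [he1]
  have hne : vs ≠ vs' := by simp [vs, vs', Subtype.ext_iff]; exact fun h => hvv' h.symm
  have h2 : e2 vs' = wt' := by simp [he2]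
  have h3 : e2 vs = wt := by
    rw [he2]
    simp only [Equiv.trans_apply, h1]
    rw [Equiv.swap_apply_of_ne_of_ne]
    · rw [← h1]; exact fun hc => hne (e1.injective hc)
    · simp [wt, wt', Subtype.ext_iff]; exact hww'.symm
  refine ⟨(Module.Basis.extend hs).equiv (Module.Basis.extend ht) e2, ?_, ?_⟩
  · have := (Module.Basis.extend hs).equiv_apply vs (Module.Basis.extend ht) e2
    rwa [Module.Basis.extend_apply_self, h3, Module.Basis.extend_apply_self] at this
  · have := (Module.Basis.extend hs).equiv_apply vs' (Module.Basis.extend ht) e2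
    rwa [Module.Basis.extend_apply_self, h2, Module.Basis.extend_apply_self] at this

/-- transitivity of GL on nonzero vectors -/
lemma exists_equiv_single {v w : V} (hv : v ≠ 0) (hw : w ≠ 0) :
    ∃ H : V ≃ₗ[F] V, H v = w := by
  classical
  have hs : LinearIndepOn F id ({v} : Set V) :=
    LinearIndepOn.singleton hv
  have ht : LinearIndepOn F id ({w} : Set V) :=
    LinearIndepOn.singleton hw
  have hss : ({v} : Set V) ⊆ hs.extend (Set.subset_univ _) := hs.subset_extend _
  have htt : ({w} : Set V) ⊆ ht.extend (Set.subset_univ _) := ht.subset_extend _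
  haveI : Fintype ↥(hs.extend (Set.subset_univ _)) := (Set.toFinite _).fintype
  haveI : Fintype ↥(ht.extend (Set.subset_univ _)) := (Set.toFinite _).fintype
  have hcard : Fintype.card ↥(hs.extend (Set.subset_univ _))
      = Fintype.card ↥(ht.extend (Set.subset_univ _)) := by
    rw [← Module.finrank_eq_card_basis (Module.Basis.extend hs),
      ← Module.finrank_eq_card_basis (Module.Basis.extend ht)]
  obtain ⟨e0⟩ := Fintype.card_eq.mp hcard
  set vs : ↥(hs.extend (Set.subset_univ _)) := ⟨v, hss (by simp)⟩
  set wt : ↥(ht.extend (Set.subset_univ _)) := ⟨w, htt (by simp)⟩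
  set e1 := e0.trans (Equiv.swap (e0 vs) wt) with he1
  have h1 : e1 vs = wt := by simp [he1]
  refine ⟨(Module.Basis.extend hs).equiv (Module.Basis.extend ht) e1, ?_⟩
  have := (Module.Basis.extend hs).equiv_apply vs (Module.Basis.extend ht) e1
  rwa [Module.Basis.extend_apply_self, h1, Module.Basis.extend_apply_self] at this

end Trans

section Count
open scoped Classical
variable {F : Type*} [Field F] [Fintype F] {V : Type*} [AddCommGroup V] [Module F V]
  [Fintype V] [FiniteDimensional F V] [Fintype (V ≃ₗ[F] V)]

open Finset in
lemma count_single {a b : V} (ha : a ≠ 0) (hb : b ≠ 0) :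
    (univ.filter fun H : V ≃ₗ[F] V => H b = a).card * (Fintype.card V - 1)
      = Fintype.card (V ≃ₗ[F] V) := by
  classical
  have key : ∀ x : V, x ≠ 0 → (univ.filter fun H : V ≃ₗ[F] V => H b = x).card
      = (univ.filter fun H : V ≃ₗ[F] V => H b = a).card := by
    intro x hx
    obtain ⟨K, hK⟩ := exists_equiv_single (F := F) hx ha
    refine Finset.card_bij' (fun H _ => H.trans K) (fun H _ => H.trans K.symm) ?_ ?_ ?_ ?_
    · intro H hH
      simp only [Finset.mem_filter, Finset.mem_univ, true_and] at hH ⊢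
      rw [LinearEquiv.trans_apply, hH, hK]
    · intro H hH
      simp only [Finset.mem_filter, Finset.mem_univ, true_and] at hH ⊢
      rw [LinearEquiv.trans_apply, hH, ← hK, LinearEquiv.symm_apply_apply]
    · intro H _; exact LinearEquiv.ext fun y => by simp
    · intro H _; exact LinearEquiv.ext fun y => by simp
  have h2 : Fintype.card (V ≃ₗ[F] V)
      = ∑ x ∈ univ.filter (fun x : V => x ≠ 0),
        (univ.filter fun H : V ≃ₗ[F] V => H b = x).card := by
    rw [← Finset.card_univ]
    apply Finset.card_eq_sum_card_fiberwise
    intro H _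
    simp [hb]
  rw [h2, Finset.sum_congr rfl (fun x hx => key x (by simpa using hx)),
    Finset.sum_const, smul_eq_mul, Finset.filter_ne',
    Finset.card_erase_of_mem (Finset.mem_univ _), Finset.card_univ, mul_comm]

open Finset in
lemma card_filter_mem_span {x : V} (hx : x ≠ 0) :
    (univ.filter fun y : V => y ∈ Submodule.span F {x}).card = Fintype.card F := by
  rw [← Fintype.card_subtype]
  exact (Fintype.card_congr (LinearEquiv.toSpanNonzeroSingleton F V x hx).toEquiv).symm

open Finset in
lemma card_filter_not_mem_span {x : V} (hx : x ≠ 0) :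
    (univ.filter fun y : V => y ∉ Submodule.span F {x}).card
      = Fintype.card V - Fintype.card F := by
  have := Finset.card_filter_add_card_filter_not
    (s := (univ : Finset V)) (fun y : V => y ∈ Submodule.span F {x})
  rw [card_univ, card_filter_mem_span hx] at this
  omega

open Finset in
lemma map_pair_mem (H : V ≃ₗ[F] V) {b b' : V} (hb : b ≠ 0)
    (hb' : b' ∉ Submodule.span F {b}) :
    H b ≠ 0 ∧ H b' ∉ Submodule.span F {H b} := by
  constructor
  · simpa using hb
  · intro hmem
    apply hb'
    have : Submodule.span F {H b} = Submodule.map (H : V →ₗ[F] V) (Submodule.span F {b}) := by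
      rw [Submodule.map_span, Set.image_singleton]; rfl
    rw [this, Submodule.mem_map_equiv] at hmem
    simpa using hmem

open Finset in
lemma count_pair {a a' b b' : V} (ha : a ≠ 0) (ha' : a' ∉ Submodule.span F {a})
    (hb : b ≠ 0) (hb' : b' ∉ Submodule.span F {b}) :
    (univ.filter fun H : V ≃ₗ[F] V => H b = a ∧ H b' = a').card
      * ((Fintype.card V - 1) * (Fintype.card V - Fintype.card F))
      = Fintype.card (V ≃ₗ[F] V) := by
  classical
  set P : Finset (V × V) :=
    univ.filter (fun p : V × V => p.1 ≠ 0 ∧ p.2 ∉ Submodule.span F {p.1}) with hP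
  have key : ∀ p : V × V, p.1 ≠ 0 → p.2 ∉ Submodule.span F {p.1} →
      (univ.filter fun H : V ≃ₗ[F] V => H b = p.1 ∧ H b' = p.2).card
      = (univ.filter fun H : V ≃ₗ[F] V => H b = a ∧ H b' = a').card := by
    intro p hp1 hp2
    obtain ⟨K, hK1, hK2⟩ := exists_equiv_pair (F := F) hp1 hp2 ha ha'
    refine Finset.card_bij' (fun H _ => H.trans K) (fun H _ => H.trans K.symm) ?_ ?_ ?_ ?_
    · intro H hH
      simp only [Finset.mem_filter, Finset.mem_univ, true_and] at hH ⊢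
      rw [LinearEquiv.trans_apply, LinearEquiv.trans_apply, hH.1, hH.2, hK1, hK2]
      exact ⟨rfl, rfl⟩
    · intro H hH
      simp only [Finset.mem_filter, Finset.mem_univ, true_and] at hH ⊢
      rw [LinearEquiv.trans_apply, LinearEquiv.trans_apply, hH.1, hH.2,
        ← hK1, ← hK2, LinearEquiv.symm_apply_apply, LinearEquiv.symm_apply_apply]
      exact ⟨rfl, rfl⟩
    · intro H _; exact LinearEquiv.ext fun y => by simp
    · intro H _; exact LinearEquiv.ext fun y => by simp
  have h2 : Fintype.card (V ≃ₗ[F] V)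
      = ∑ p ∈ P, (univ.filter fun H : V ≃ₗ[F] V => H b = p.1 ∧ H b' = p.2).card := by
    rw [← Finset.card_univ]
    have := Finset.card_eq_sum_card_fiberwise
      (f := fun H : V ≃ₗ[F] V => (H b, H b')) (s := univ) (t := P)
      (fun H _ => by
        simp only [hP, Finset.mem_coe, Finset.mem_filter, Finset.mem_univ, true_and]
        exact map_pair_mem H hb hb')
    rw [this]
    refine Finset.sum_congr rfl fun p _ => ?_
    refine congrArg Finset.card (Finset.filter_congr fun H _ => ?_)
    simp [Prod.ext_iff]
  have hPcard : P.card = (Fintype.card V - 1) * (Fintype.card V - Fintype.card F) := by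
    have hfib : P.card = ∑ x ∈ univ.filter (fun x : V => x ≠ 0),
        (P.filter fun p => p.1 = x).card := by
      apply Finset.card_eq_sum_card_fiberwise
      intro p hp
      simp only [hP, Finset.mem_coe, Finset.mem_filter, Finset.mem_univ, true_and] at hp ⊢
      exact hp.1
    rw [hfib]
    have : ∀ x ∈ univ.filter (fun x : V => x ≠ 0),
        (P.filter fun p => p.1 = x).card
          = (univ.filter fun y : V => y ∉ Submodule.span F {x}).card := by
      intro x hx
      simp only [Finset.mem_filter, Finset.mem_univ, true_and] at hx
      refine Finset.card_bij' (fun p _ => p.2) (fun y _ => (x, y)) ?_ ?_ ?_ ?_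
      · intro p hp
        simp only [hP, Finset.mem_filter, Finset.mem_univ, true_and] at hp ⊢
        rcases hp with ⟨⟨_, h2⟩, h3⟩
        rwa [h3] at h2
      · intro y hy
        simp only [hP, Finset.mem_filter, Finset.mem_univ, true_and] at hy ⊢
        exact ⟨⟨hx, hy⟩, trivial⟩
      · intro p hp
        simp only [hP, Finset.mem_filter, Finset.mem_univ, true_and] at hp
        exact Prod.ext hp.2.symm rfl
      · intro y _; rfl
    rw [Finset.sum_congr rfl this]
    have h3 : ∀ x ∈ univ.filter (fun x : V => x ≠ 0),
        (univ.filter fun y : V => y ∉ Submodule.span F {x}).card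
          = Fintype.card V - Fintype.card F := by
      intro x hx
      exact card_filter_not_mem_span (by simpa using hx)
    rw [Finset.sum_congr rfl h3, Finset.sum_const, smul_eq_mul, Finset.filter_ne',
      Finset.card_erase_of_mem (Finset.mem_univ _), Finset.card_univ]
  rw [h2, Finset.sum_congr rfl (fun p hp => by
    simp only [hP, Finset.mem_filter, Finset.mem_univ, true_and] at hp
    exact key p hp.1 hp.2), Finset.sum_const, smul_eq_mul, hPcard, mul_comm]

open Finset in
lemma count_mem_single {A : Set V} (hA0 : (0:V) ∉ A) {b : V} (hb : b ≠ 0) :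
    (univ.filter fun H : V ≃ₗ[F] V => H b ∈ A).card * (Fintype.card V - 1)
      = (Set.toFinite A).toFinset.card * Fintype.card (V ≃ₗ[F] V) := by
  classical
  set Af := (Set.toFinite A).toFinset with hAf
  have hfib : (univ.filter fun H : V ≃ₗ[F] V => H b ∈ A).card
      = ∑ a ∈ Af, ((univ.filter fun H : V ≃ₗ[F] V => H b ∈ A).filter
          fun H => H b = a).card := by
    apply Finset.card_eq_sum_card_fiberwise
    intro H hH
    simp only [Finset.mem_coe, Finset.mem_filter, Finset.mem_univ, true_and] at hH
    simpa [hAf, Set.Finite.mem_toFinset] using hH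
  have hfib2 : ∀ a ∈ Af, ((univ.filter fun H : V ≃ₗ[F] V => H b ∈ A).filter
      fun H => H b = a).card = (univ.filter fun H : V ≃ₗ[F] V => H b = a).card := by
    intro a ha
    simp only [hAf, Set.Finite.mem_toFinset] at ha
    congr 1
    rw [Finset.filter_filter]
    apply Finset.filter_congr
    intro H _
    constructor
    · exact fun h => h.2
    · exact fun h => ⟨h ▸ ha, h⟩
  rw [hfib, Finset.sum_congr rfl hfib2, Finset.sum_mul]
  have : ∀ a ∈ Af, (univ.filter fun H : V ≃ₗ[F] V => H b = a).card
      * (Fintype.card V - 1) = Fintype.card (V ≃ₗ[F] V) := by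
    intro a ha
    simp only [hAf, Set.Finite.mem_toFinset] at ha
    exact count_single (fun h => hA0 (h ▸ ha)) hb
  rw [Finset.sum_congr rfl this, Finset.sum_const, smul_eq_mul]

open Finset in
lemma count_mem_pair {A : Set V} (hA0 : (0:V) ∉ A) {b b' : V} (hb : b ≠ 0)
    (hb' : b' ∉ Submodule.span F {b}) :
    (univ.filter fun H : V ≃ₗ[F] V => H b ∈ A ∧ H b' ∈ A).card
      * ((Fintype.card V - 1) * (Fintype.card V - Fintype.card F))
      ≤ (Set.toFinite A).toFinset.card ^ 2 * Fintype.card (V ≃ₗ[F] V) := by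
  classical
  set Af := (Set.toFinite A).toFinset with hAf
  have hfib : (univ.filter fun H : V ≃ₗ[F] V => H b ∈ A ∧ H b' ∈ A).card
      = ∑ q ∈ Af ×ˢ Af, ((univ.filter fun H : V ≃ₗ[F] V => H b ∈ A ∧ H b' ∈ A).filter
          fun H => (H b, H b') = q).card := by
    apply Finset.card_eq_sum_card_fiberwise
    intro H hH
    simp only [Finset.mem_coe, Finset.mem_filter, Finset.mem_univ, true_and] at hH
    simp only [hAf, Finset.mem_coe, Finset.mem_product, Set.Finite.mem_toFinset]
    exact hH
  have hle : ∀ q ∈ Af ×ˢ Af, ((univ.filter fun H : V ≃ₗ[F] V => H b ∈ A ∧ H b' ∈ A).filter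
      fun H => (H b, H b') = q).card * ((Fintype.card V - 1) * (Fintype.card V - Fintype.card F))
      ≤ Fintype.card (V ≃ₗ[F] V) := by
    intro q hq
    simp only [hAf, Finset.mem_product, Set.Finite.mem_toFinset] at hq
    have hq1 : q.1 ≠ 0 := fun h => hA0 (h ▸ hq.1)
    by_cases hspan : q.2 ∈ Submodule.span F {q.1}
    · have : ((univ.filter fun H : V ≃ₗ[F] V => H b ∈ A ∧ H b' ∈ A).filter
          fun H => (H b, H b') = q) = ∅ := by
        rw [Finset.filter_eq_empty_iff]
        intro H _
        intro hc
        have h2 := (map_pair_mem H hb hb').2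
        have hc1 : H b = q.1 := congrArg Prod.fst hc
        have hc2 : H b' = q.2 := congrArg Prod.snd hc
        rw [hc1, hc2] at h2
        exact h2 hspan
      simp [this]
    · have heq : ((univ.filter fun H : V ≃ₗ[F] V => H b ∈ A ∧ H b' ∈ A).filter
          fun H => (H b, H b') = q) = univ.filter fun H : V ≃ₗ[F] V => H b = q.1 ∧ H b' = q.2 := by
        ext H
        simp only [Finset.filter_filter, Finset.mem_filter, Finset.mem_univ, true_and,
          Prod.ext_iff]
        constructor
        · exact fun h => h.2
        · rintro ⟨h1, h2⟩
          exact ⟨⟨h1 ▸ hq.1, h2 ▸ hq.2⟩, h1, h2⟩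
      rw [heq, count_pair hq1 hspan hb hb']
  calc (univ.filter fun H : V ≃ₗ[F] V => H b ∈ A ∧ H b' ∈ A).card
      * ((Fintype.card V - 1) * (Fintype.card V - Fintype.card F))
      = ∑ q ∈ Af ×ˢ Af, ((univ.filter fun H : V ≃ₗ[F] V => H b ∈ A ∧ H b' ∈ A).filter
          fun H => (H b, H b') = q).card * ((Fintype.card V - 1) * (Fintype.card V - Fintype.card F)) := by
        rw [hfib, Finset.sum_mul]
    _ ≤ ∑ _q ∈ Af ×ˢ Af, Fintype.card (V ≃ₗ[F] V) := Finset.sum_le_sum hle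
    _ = Af.card ^ 2 * Fintype.card (V ≃ₗ[F] V) := by
        rw [Finset.sum_const, smul_eq_mul, Finset.card_product, sq]

set_option maxHeartbeats 1000000 in
open Finset in
lemma prob_bound {A B : Set V} (hA0 : (0:V) ∉ A) (hB0 : (0:V) ∉ B)
    (hAne : A.Nonempty) (hBne : B.Nonempty) (hlm : Fintype.card F < Fintype.card V) :
    ((univ.filter fun H : V ≃ₗ[F] V => A ∩ (fun v => H v) '' B = ∅).card : ℝ)
        / (Fintype.card (V ≃ₗ[F] V) : ℝ)
      ≤ (Fintype.card F : ℝ) * ((Fintype.card V : ℝ) - 1)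
          / (((Set.toFinite A).toFinset.card : ℝ) * ((Set.toFinite B).toFinset.card : ℝ))
        + ((Fintype.card F : ℝ) - 1) / ((Fintype.card V : ℝ) - (Fintype.card F : ℝ)) := by
  classical
  set Af := (Set.toFinite A).toFinset with hAf
  set Bf := (Set.toFinite B).toFinset with hBf
  set N : (V ≃ₗ[F] V) → ℕ := fun H => (Bf.filter fun x => H x ∈ A).card with hN
  -- abbreviations (real)
  set l : ℝ := (Fintype.card F : ℝ) with hldef
  set m : ℝ := (Fintype.card V : ℝ) with hmdef
  set g : ℝ := (Fintype.card (V ≃ₗ[F] V) : ℝ) with hgdef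
  set α : ℝ := (Af.card : ℝ) with hαdef
  set β : ℝ := (Bf.card : ℝ) with hβdef
  -- positivity facts
  have hl2 : (2:ℝ) ≤ l := by
    rw [hldef]; exact_mod_cast Fintype.one_lt_card
  have hmlR : l < m := by rw [hldef, hmdef]; exact_mod_cast hlm
  have hm1 : (1:ℝ) < m := by linarith
  have hgpos : (0:ℝ) < g := by rw [hgdef]; exact_mod_cast Fintype.card_pos
  have hα1 : (1:ℝ) ≤ α := by
    rw [hαdef]
    have : 0 < Af.card := Finset.card_pos.mpr (by
      obtain ⟨a, ha⟩ := hAne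
      exact ⟨a, by rw [hAf, Set.Finite.mem_toFinset]; exact ha⟩)
    exact_mod_cast this
  have hβ1 : (1:ℝ) ≤ β := by
    rw [hβdef]
    have : 0 < Bf.card := Finset.card_pos.mpr (by
      obtain ⟨b, hb⟩ := hBne
      exact ⟨b, by rw [hBf, Set.Finite.mem_toFinset]; exact hb⟩)
    exact_mod_cast this
  have hbne0 : ∀ b ∈ Bf, b ≠ 0 := by
    intro b hb
    rw [hBf, Set.Finite.mem_toFinset] at hb
    exact fun h => hB0 (h ▸ hb)
  -- event rewriting
  have hev : (univ.filter fun H : V ≃ₗ[F] V => A ∩ (fun v => H v) '' B = ∅)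
      = univ.filter fun H : V ≃ₗ[F] V => N H = 0 := by
    apply Finset.filter_congr
    intro H _
    simp only [hN]
    simp only [Finset.card_eq_zero, Finset.filter_eq_empty_iff]
    rw [Set.eq_empty_iff_forall_notMem]
    constructor
    · intro h b hb hHb
      rw [hBf, Set.Finite.mem_toFinset] at hb
      exact h (H b) ⟨hHb, ⟨b, hb, rfl⟩⟩
    · rintro h x ⟨hxA, b, hbB, rfl⟩
      exact h (by rw [hBf, Set.Finite.mem_toFinset]; exact hbB) hxA
  -- sums
  set S1 : ℝ := ∑ H : V ≃ₗ[F] V, (N H : ℝ) with hS1def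
  set S2 : ℝ := ∑ H : V ≃ₗ[F] V, (N H : ℝ)^2 with hS2def
  have hNsum : ∀ H : V ≃ₗ[F] V, (N H : ℝ) = ∑ b ∈ Bf, (if H b ∈ A then (1:ℝ) else 0) := by
    intro H
    simp only [hN]
    rw [Finset.card_filter, Nat.cast_sum]
    exact Finset.sum_congr rfl (fun b _ => by split <;> simp)
  -- single counts, real
  have hcnt : ∀ b ∈ Bf, ((univ.filter fun H : V ≃ₗ[F] V => H b ∈ A).card : ℝ) * (m - 1)
      = α * g := by
    intro b hb
    have hnat := count_mem_single (F := F) hA0 (hbne0 b hb)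
    have hcast := congrArg (Nat.cast : ℕ → ℝ) hnat
    rw [Nat.cast_mul, Nat.cast_mul, Nat.cast_sub (by exact_mod_cast Fintype.card_pos),
      Nat.cast_one] at hcast
    exact hcast
  have hS1m : S1 * (m - 1) = α * β * g := by
    have h1 : S1 = ∑ b ∈ Bf, ((univ.filter fun H : V ≃ₗ[F] V => H b ∈ A).card : ℝ) := by
      rw [hS1def, Finset.sum_congr rfl (fun H _ => hNsum H), Finset.sum_comm]
      exact Finset.sum_congr rfl (fun b _ => by rw [Finset.sum_boole])
    rw [h1, Finset.sum_mul, Finset.sum_congr rfl hcnt, Finset.sum_const, nsmul_eq_mul]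
    rw [← hβdef]; ring
  -- pair counts, real
  have hS2sum : S2 = ∑ p ∈ Bf ×ˢ Bf,
      ((univ.filter fun H : V ≃ₗ[F] V => H p.1 ∈ A ∧ H p.2 ∈ A).card : ℝ) := by
    have h1 : ∀ H : V ≃ₗ[F] V, (N H : ℝ)^2
        = ∑ p ∈ Bf ×ˢ Bf, (if H p.1 ∈ A ∧ H p.2 ∈ A then (1:ℝ) else 0) := by
      intro H
      rw [sq, hNsum H, Finset.sum_mul_sum, ← Finset.sum_product']
      refine Finset.sum_congr rfl fun p _ => ?_
      by_cases h1 : H p.1 ∈ A <;> by_cases h2 : H p.2 ∈ A <;> simp [h1, h2]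
    rw [hS2def, Finset.sum_congr rfl (fun H _ => h1 H), Finset.sum_comm]
    exact Finset.sum_congr rfl (fun p _ => by rw [Finset.sum_boole])
  have hdepcard : (((Bf ×ˢ Bf).filter fun p : V × V =>
      p.2 ∈ Submodule.span F {p.1}).card : ℝ) ≤ β * l := by
    have hnat : ((Bf ×ˢ Bf).filter fun p : V × V =>
        p.2 ∈ Submodule.span F {p.1}).card ≤ Bf.card * Fintype.card F := by
      have hfib : ((Bf ×ˢ Bf).filter fun p : V × V => p.2 ∈ Submodule.span F {p.1}).card
          = ∑ b ∈ Bf, (((Bf ×ˢ Bf).filter fun p : V × V => p.2 ∈ Submodule.span F {p.1}).filter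
              fun p => p.1 = b).card := by
        apply Finset.card_eq_sum_card_fiberwise
        intro p hp
        simp only [Finset.mem_coe, Finset.mem_filter, Finset.mem_product] at hp
        exact hp.1.1
      rw [hfib]
      calc ∑ b ∈ Bf, (((Bf ×ˢ Bf).filter fun p : V × V => p.2 ∈ Submodule.span F {p.1}).filter
              fun p => p.1 = b).card
          ≤ ∑ b ∈ Bf, Fintype.card F := by
            refine Finset.sum_le_sum fun b hb => ?_
            rw [← card_filter_mem_span (F := F) (hbne0 b hb)]
            apply Finset.card_le_card_of_injOn (fun p => p.2)
            · intro p hp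
              simp only [Finset.mem_coe, Finset.mem_filter, Finset.mem_product] at hp
              show p.2 ∈ univ.filter fun y : V => y ∈ Submodule.span F {b}
              refine Finset.mem_filter.mpr ⟨Finset.mem_univ _, ?_⟩
              rcases hp with ⟨⟨_, h2⟩, h3⟩
              rwa [h3] at h2
            · intro p hp q hq hpq
              simp only [Finset.mem_coe, Finset.mem_filter, Finset.mem_product] at hp hq
              exact Prod.ext (hp.2.trans hq.2.symm) hpq
        _ = Bf.card * Fintype.card F := by rw [Finset.sum_const, smul_eq_mul]
    calc (((Bf ×ˢ Bf).filter fun p : V × V => p.2 ∈ Submodule.span F {p.1}).card : ℝ)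
        ≤ ((Bf.card * Fintype.card F : ℕ) : ℝ) := by exact_mod_cast hnat
      _ = β * l := by rw [Nat.cast_mul, ← hβdef, ← hldef]
  have hpaircnt : ∀ p : V × V, p ∈ Bf ×ˢ Bf → p.2 ∉ Submodule.span F {p.1} →
      ((univ.filter fun H : V ≃ₗ[F] V => H p.1 ∈ A ∧ H p.2 ∈ A).card : ℝ)
        * ((m - 1) * (m - l)) ≤ α^2 * g := by
    intro p hp hspan
    simp only [Finset.mem_product] at hp
    have hnat := count_mem_pair (F := F) hA0 (hbne0 p.1 hp.1) hspan
    have hcast := (Nat.cast_le (α := ℝ)).mpr hnat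
    rw [Nat.cast_mul, Nat.cast_mul, Nat.cast_mul, Nat.cast_sub (by exact_mod_cast Fintype.card_pos),
      Nat.cast_sub hlm.le, Nat.cast_one, Nat.cast_pow] at hcast
    exact hcast
  have hS2m : S2 * ((m - 1) * (m - l)) ≤ l * β * (α * g) * (m - l) + β^2 * (α^2 * g) := by
    rw [hS2sum, Finset.sum_mul,
      ← Finset.sum_filter_add_sum_filter_not (Bf ×ˢ Bf)
        (fun p : V × V => p.2 ∈ Submodule.span F {p.1})]
    have hdep : ∑ p ∈ (Bf ×ˢ Bf).filter (fun p : V × V => p.2 ∈ Submodule.span F {p.1}),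
        ((univ.filter fun H : V ≃ₗ[F] V => H p.1 ∈ A ∧ H p.2 ∈ A).card : ℝ)
          * ((m - 1) * (m - l)) ≤ l * β * (α * g) * (m - l) := by
      have hterm : ∀ p ∈ (Bf ×ˢ Bf).filter (fun p : V × V => p.2 ∈ Submodule.span F {p.1}),
          ((univ.filter fun H : V ≃ₗ[F] V => H p.1 ∈ A ∧ H p.2 ∈ A).card : ℝ)
            * ((m - 1) * (m - l)) ≤ (α * g) * (m - l) := by
        intro p hp
        simp only [Finset.mem_filter, Finset.mem_product] at hp
        have hmono : ((univ.filter fun H : V ≃ₗ[F] V => H p.1 ∈ A ∧ H p.2 ∈ A).card : ℝ)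
            ≤ ((univ.filter fun H : V ≃ₗ[F] V => H p.1 ∈ A).card : ℝ) := by
          have hsub : (univ.filter fun H : V ≃ₗ[F] V => H p.1 ∈ A ∧ H p.2 ∈ A)
              ⊆ univ.filter fun H : V ≃ₗ[F] V => H p.1 ∈ A := by
            intro H hH
            simp only [Finset.mem_filter, Finset.mem_univ, true_and] at hH ⊢
            exact hH.1
          exact_mod_cast Finset.card_le_card hsub
        calc ((univ.filter fun H : V ≃ₗ[F] V => H p.1 ∈ A ∧ H p.2 ∈ A).card : ℝ)
              * ((m - 1) * (m - l))
            ≤ ((univ.filter fun H : V ≃ₗ[F] V => H p.1 ∈ A).card : ℝ) * ((m - 1) * (m - l)) := by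
              apply mul_le_mul_of_nonneg_right hmono
              exact mul_nonneg (by linarith) (by linarith)
          _ = (((univ.filter fun H : V ≃ₗ[F] V => H p.1 ∈ A).card : ℝ) * (m - 1)) * (m - l) := by
              ring
          _ = (α * g) * (m - l) := by rw [hcnt p.1 hp.1.1]
      calc ∑ p ∈ (Bf ×ˢ Bf).filter (fun p : V × V => p.2 ∈ Submodule.span F {p.1}),
          ((univ.filter fun H : V ≃ₗ[F] V => H p.1 ∈ A ∧ H p.2 ∈ A).card : ℝ)
            * ((m - 1) * (m - l))
          ≤ ∑ _p ∈ (Bf ×ˢ Bf).filter (fun p : V × V => p.2 ∈ Submodule.span F {p.1}),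
            (α * g) * (m - l) := Finset.sum_le_sum hterm
        _ = (((Bf ×ˢ Bf).filter fun p : V × V => p.2 ∈ Submodule.span F {p.1}).card : ℝ)
            * ((α * g) * (m - l)) := by rw [Finset.sum_const, nsmul_eq_mul]
        _ ≤ (β * l) * ((α * g) * (m - l)) := by
            apply mul_le_mul_of_nonneg_right hdepcard
            exact mul_nonneg (mul_nonneg (by linarith) (by linarith)) (by linarith)
        _ = l * β * (α * g) * (m - l) := by ring
    have hindep : ∑ p ∈ (Bf ×ˢ Bf).filter (fun p : V × V => ¬ p.2 ∈ Submodule.span F {p.1}),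
        ((univ.filter fun H : V ≃ₗ[F] V => H p.1 ∈ A ∧ H p.2 ∈ A).card : ℝ)
          * ((m - 1) * (m - l)) ≤ β^2 * (α^2 * g) := by
      calc ∑ p ∈ (Bf ×ˢ Bf).filter (fun p : V × V => ¬ p.2 ∈ Submodule.span F {p.1}),
          ((univ.filter fun H : V ≃ₗ[F] V => H p.1 ∈ A ∧ H p.2 ∈ A).card : ℝ)
            * ((m - 1) * (m - l))
          ≤ ∑ _p ∈ (Bf ×ˢ Bf).filter (fun p : V × V => ¬ p.2 ∈ Submodule.span F {p.1}),
            α^2 * g := by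
            refine Finset.sum_le_sum fun p hp => ?_
            simp only [Finset.mem_filter] at hp
            exact hpaircnt p hp.1 hp.2
        _ = (((Bf ×ˢ Bf).filter fun p : V × V => ¬ p.2 ∈ Submodule.span F {p.1}).card : ℝ)
            * (α^2 * g) := by rw [Finset.sum_const, nsmul_eq_mul]
        _ ≤ ((Bf ×ˢ Bf).card : ℝ) * (α^2 * g) := by
            apply mul_le_mul_of_nonneg_right
            · exact_mod_cast Finset.card_le_card (Finset.filter_subset _ _)
            · positivity
        _ = β^2 * (α^2 * g) := by
            rw [Finset.card_product, Nat.cast_mul, ← hβdef]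
            ring
    linarith
  -- Chebyshev
  set E : ℝ := ((univ.filter fun H : V ≃ₗ[F] V => N H = 0).card : ℝ) with hEdef
  have cheb : E * S1^2 ≤ g^2 * S2 - g * S1^2 := by
    have expand : ∑ H : V ≃ₗ[F] V, (g * (N H : ℝ) - S1)^2 = g^2 * S2 - g * S1^2 := by
      have h1 : ∀ H : V ≃ₗ[F] V, (g * (N H : ℝ) - S1)^2
          = g^2 * (N H : ℝ)^2 - 2 * g * S1 * (N H : ℝ) + S1^2 := fun H => by ring
      rw [Finset.sum_congr rfl (fun H _ => h1 H), Finset.sum_add_distrib,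
        Finset.sum_sub_distrib, ← Finset.mul_sum, ← Finset.mul_sum, Finset.sum_const,
        nsmul_eq_mul, Finset.card_univ, ← hS1def, ← hS2def, ← hgdef]
      ring
    have lower : E * S1^2 ≤ ∑ H : V ≃ₗ[F] V, (g * (N H : ℝ) - S1)^2 := by
      have h2 : ∀ H ∈ univ.filter (fun H : V ≃ₗ[F] V => N H = 0),
          (g * (N H : ℝ) - S1)^2 = S1^2 := by
        intro H hH
        simp only [Finset.mem_filter] at hH
        rw [hH.2]
        push_cast
        ring
      calc E * S1^2 = ∑ H ∈ univ.filter (fun H : V ≃ₗ[F] V => N H = 0), (g * (N H : ℝ) - S1)^2 := by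
            rw [Finset.sum_congr rfl h2, Finset.sum_const, nsmul_eq_mul, hEdef]
        _ ≤ ∑ H : V ≃ₗ[F] V, (g * (N H : ℝ) - S1)^2 :=
            Finset.sum_le_sum_of_subset_of_nonneg (Finset.subset_univ _)
              (fun _ _ _ => sq_nonneg _)
    linarith [expand ▸ lower]
  -- final algebra
  have key : E * (α * β * (m - l)) ≤ g * (l * (m - 1) * (m - l) + (l - 1) * (α * β)) := by
    have h4 : E * S1^2 * ((m - 1)^2 * (m - l)) ≤ (g^2 * S2 - g * S1^2) * ((m - 1)^2 * (m - l)) :=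
      mul_le_mul_of_nonneg_right cheb
        (mul_nonneg (by positivity) (by linarith))
    have e1 : E * S1^2 * ((m - 1)^2 * (m - l)) = E * (m - l) * (S1 * (m - 1))^2 := by ring
    have e2 : (g^2 * S2 - g * S1^2) * ((m - 1)^2 * (m - l))
        = g^2 * (m - 1) * (S2 * ((m - 1) * (m - l))) - g * (m - l) * (S1 * (m - 1))^2 := by ring
    rw [e1, e2, hS1m] at h4
    have h6 : g^2 * (m - 1) * (S2 * ((m - 1) * (m - l)))
        ≤ g^2 * (m - 1) * (l * β * (α * g) * (m - l) + β^2 * (α^2 * g)) := by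
      apply mul_le_mul_of_nonneg_left hS2m
      exact mul_nonneg (by positivity) (by linarith)
    have h5 : E * (m - l) * (α * β * g)^2
        ≤ g^2 * (m - 1) * (l * β * (α * g) * (m - l) + β^2 * (α^2 * g))
          - g * (m - l) * (α * β * g)^2 := by linarith
    have hpos : (0:ℝ) < (α * β) * g^2 :=
      mul_pos (mul_pos (by linarith) (by linarith)) (pow_pos hgpos 2)
    rw [show E * (α * β * (m - l)) = E * (m - l) * (α * β * g)^2 / ((α * β) * g^2) from by
      field_simp]
    rw [div_le_iff₀ hpos]
    calc E * (m - l) * (α * β * g)^2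
        ≤ g^2 * (m - 1) * (l * β * (α * g) * (m - l) + β^2 * (α^2 * g))
          - g * (m - l) * (α * β * g)^2 := h5
      _ = g * (l * (m - 1) * (m - l) + (l - 1) * (α * β)) * ((α * β) * g^2) := by ring
  -- conclude
  rw [hev, ← hEdef]
  rw [div_le_iff₀ hgpos]
  have hab : (0:ℝ) < α * β := mul_pos (by linarith) (by linarith)
  have hml0 : (0:ℝ) < m - l := by linarith
  rw [div_add_div _ _ (ne_of_gt hab) (ne_of_gt hml0), div_mul_eq_mul_div,
    le_div_iff₀ (mul_pos hab hml0)]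
  nlinarith [key]

end Count

open Filter in
lemma rate_le_one {l : ℕ} (hl : 2 ≤ l) {c : ℕ → ℕ} (hc : ∀ n, c n ≤ l ^ n)
    {R : ℝ} {e : ℕ → ℝ} (hid : ∀ n, Real.logb l (c n : ℝ) = n * R + e n)
    (he : Filter.Tendsto (fun n => e n / n) Filter.atTop (nhds 0)) : R ≤ 1 := by
  have hl1 : (1:ℝ) < (l:ℝ) := by exact_mod_cast hl
  have hev : ∀ᶠ n in atTop, e n / n ≤ 1 - R := by
    filter_upwards [Filter.eventually_ge_atTop 1] with n hn
    have hnpos : (0:ℝ) < n := by exact_mod_cast hn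
    have hub : Real.logb l (c n : ℝ) ≤ n := by
      rcases Nat.eq_zero_or_pos (c n) with h0 | hpos
      · rw [h0, Nat.cast_zero, Real.logb_zero]
        exact hnpos.le
      · have h1 : Real.logb l (c n : ℝ) ≤ Real.logb l ((l:ℝ)^n) :=
          Real.logb_le_logb_of_le hl1 (by exact_mod_cast hpos) (by exact_mod_cast hc n)
        rwa [show ((l:ℝ)^n) = (l:ℝ)^(n:ℝ) from (Real.rpow_natCast _ _).symm,
          Real.logb_rpow (by linarith) (by linarith)] at h1
    rw [hid n] at hub
    rw [div_le_iff₀ hnpos]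
    linarith
  have h0 := le_of_tendsto he hev
  linarith

lemma finite_linearEquiv (F V : Type*) [Field F] [AddCommGroup V] [Module F V] [Finite V] :
    Finite (V ≃ₗ[F] V) := by
  have h1 : Finite (V →ₗ[F] V) :=
    Finite.of_injective (fun f => (f : V → V)) DFunLike.coe_injective
  exact Finite.of_injective (fun H : V ≃ₗ[F] V => H.toLinearMap)
    LinearEquiv.toLinearMap_injective

open Filter

set_option maxHeartbeats 1000000 in
/-- asymptotic corollary of the intersection lemma: Let `F` be a finite
field of order `l`, and for each `n` let `A n, B n ⊆ F^n \ {0}` with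
`log_l |A n| = n R₁ + o(n)` and `log_l |B n| = n R₂ + o(n)` where `R₁ + R₂ > 1`.
For `H` uniformly random among invertible linear maps of `F^n`,
`P(A n ∩ H (B n) = ∅) → 0` as `n → ∞`. -/
theorem intersection_lemma_asymptotic
    (F : Type*) [Field F] [Fintype F] (l : ℕ) (hl : Fintype.card F = l)
    (R₁ R₂ : ℝ) (hR : 1 < R₁ + R₂)
    (A B : (n : ℕ) → Set (Fin n → F))
    (hA0 : ∀ n, (0 : Fin n → F) ∉ A n) (hB0 : ∀ n, (0 : Fin n → F) ∉ B n)
    (e₁ e₂ : ℕ → ℝ)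
    (hA : ∀ n, Real.logb l (Nat.card (A n) : ℝ) = n * R₁ + e₁ n)
    (hB : ∀ n, Real.logb l (Nat.card (B n) : ℝ) = n * R₂ + e₂ n)
    (he₁ : Filter.Tendsto (fun n => e₁ n / n) Filter.atTop (nhds 0))
    (he₂ : Filter.Tendsto (fun n => e₂ n / n) Filter.atTop (nhds 0)) :
    Filter.Tendsto
      (fun n =>
        (Nat.card {H : (Fin n → F) ≃ₗ[F] (Fin n → F) //
            A n ∩ (fun v => H v) '' (B n) = ∅} : ℝ) /
          (Nat.card ((Fin n → F) ≃ₗ[F] (Fin n → F)) : ℝ))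
      Filter.atTop (nhds 0) := by
  classical
  have hl2 : 2 ≤ l := hl ▸ Fintype.one_lt_card
  have hl1R : (1:ℝ) < (l:ℝ) := by exact_mod_cast hl2
  have hl0R : (0:ℝ) < (l:ℝ) := by linarith
  have hlne1 : (l:ℝ) ≠ 1 := by linarith
  -- cardinality upper bounds
  have hcardA : ∀ n, Nat.card (A n) ≤ l ^ n := by
    intro n
    have h1 := Nat.card_le_card_of_injective (Subtype.val : A n → (Fin n → F))
      Subtype.val_injective
    rwa [Nat.card_eq_fintype_card (α := Fin n → F), Fintype.card_fun, hl,
      Fintype.card_fin] at h1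
  have hcardB : ∀ n, Nat.card (B n) ≤ l ^ n := by
    intro n
    have h1 := Nat.card_le_card_of_injective (Subtype.val : B n → (Fin n → F))
      Subtype.val_injective
    rwa [Nat.card_eq_fintype_card (α := Fin n → F), Fintype.card_fun, hl,
      Fintype.card_fin] at h1
  have hR1le : R₁ ≤ 1 := rate_le_one hl2 hcardA hA he₁
  have hR2le : R₂ ≤ 1 := rate_le_one hl2 hcardB hB he₂
  have hR1pos : 0 < R₁ := by linarith
  have hR2pos : 0 < R₂ := by linarith
  -- eventual nonemptiness and value of cardinalities
  have hAfact : ∀ᶠ n in atTop, (A n).Nonempty ∧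
      ((Nat.card (A n)):ℝ) = (l:ℝ)^((n:ℝ) * R₁ + e₁ n) := by
    filter_upwards [he₁.eventually (eventually_gt_nhds (show -R₁ < 0 by linarith)),
      Filter.eventually_ge_atTop 1] with n hgt hn1
    have hnR : (0:ℝ) < n := by exact_mod_cast hn1
    have hne : (A n).Nonempty := by
      by_contra hcon
      rw [Set.not_nonempty_iff_eq_empty] at hcon
      have h0 : Nat.card (A n) = 0 := by simp [hcon]
      have h1 := hA n
      rw [h0, Nat.cast_zero, Real.logb_zero] at h1
      have h2 : e₁ n / n = -R₁ := by
        field_simp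
        linarith
      linarith
    refine ⟨hne, ?_⟩
    haveI := hne.to_subtype
    have hpos : 0 < Nat.card (A n) := Nat.card_pos
    have h3 := Real.rpow_logb hl0R hlne1 (show (0:ℝ) < (Nat.card (A n) : ℝ) by exact_mod_cast hpos)
    rw [hA n] at h3
    exact h3.symm
  have hBfact : ∀ᶠ n in atTop, (B n).Nonempty ∧
      ((Nat.card (B n)):ℝ) = (l:ℝ)^((n:ℝ) * R₂ + e₂ n) := by
    filter_upwards [he₂.eventually (eventually_gt_nhds (show -R₂ < 0 by linarith)),
      Filter.eventually_ge_atTop 1] with n hgt hn1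
    have hnR : (0:ℝ) < n := by exact_mod_cast hn1
    have hne : (B n).Nonempty := by
      by_contra hcon
      rw [Set.not_nonempty_iff_eq_empty] at hcon
      have h0 : Nat.card (B n) = 0 := by simp [hcon]
      have h1 := hB n
      rw [h0, Nat.cast_zero, Real.logb_zero] at h1
      have h2 : e₂ n / n = -R₂ := by
        field_simp
        linarith
      linarith
    refine ⟨hne, ?_⟩
    haveI := hne.to_subtype
    have hpos : 0 < Nat.card (B n) := Nat.card_pos
    have h3 := Real.rpow_logb hl0R hlne1 (show (0:ℝ) < (Nat.card (B n) : ℝ) by exact_mod_cast hpos)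
    rw [hB n] at h3
    exact h3.symm
  -- upper bound function
  set u : ℕ → ℝ := fun n => (l:ℝ) ^ (1 + (n:ℝ) - ((n:ℝ)*(R₁+R₂) + e₁ n + e₂ n))
      + ((l:ℝ) - 1)/((l:ℝ)^n - (l:ℝ)) with hu_def
  -- limit of exponent
  have hdiv : Tendsto (fun n : ℕ => (1 + (n:ℝ) - ((n:ℝ)*(R₁+R₂) + e₁ n + e₂ n)) / n) atTop
      (nhds (1 - (R₁+R₂))) := by
    have hbase : Tendsto (fun n : ℕ => 1/(n:ℝ) + 1 - (R₁+R₂) - e₁ n/(n:ℝ) - e₂ n/(n:ℝ)) atTop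
        (nhds (0 + 1 - (R₁+R₂) - 0 - 0)) :=
      (((tendsto_one_div_atTop_nhds_zero_nat.add tendsto_const_nhds).sub
        tendsto_const_nhds).sub he₁).sub he₂
    rw [show (0:ℝ) + 1 - (R₁+R₂) - 0 - 0 = 1 - (R₁+R₂) by ring] at hbase
    refine Tendsto.congr' ?_ hbase
    filter_upwards [Filter.eventually_ge_atTop 1] with n hn1
    have hnne : ((n:ℝ)) ≠ 0 := by
      have : (0:ℝ) < n := by exact_mod_cast hn1
      linarith
    field_simp
    ring
  have hatBot : Tendsto (fun n : ℕ => 1 + (n:ℝ) - ((n:ℝ)*(R₁+R₂) + e₁ n + e₂ n)) atTop atBot := by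
    have hcneg : 1 - (R₁+R₂) < 0 := by linarith
    have hev2 : ∀ᶠ n : ℕ in atTop, (1 + (n:ℝ) - ((n:ℝ)*(R₁+R₂) + e₁ n + e₂ n))
        ≤ ((1 - (R₁+R₂))/2)*(n:ℝ) := by
      filter_upwards [hdiv.eventually (eventually_le_nhds
        (show 1 - (R₁+R₂) < (1 - (R₁+R₂))/2 by linarith)),
        Filter.eventually_ge_atTop 1] with n h1 h2
      have hnpos : (0:ℝ) < n := by exact_mod_cast h2
      rw [div_le_iff₀ hnpos] at h1
      linarith
    have hlin : Tendsto (fun n : ℕ => ((1 - (R₁+R₂))/2)*(n:ℝ)) atTop atBot := by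
      have h1 : Tendsto (fun n : ℕ => (-((1 - (R₁+R₂))/2))*(n:ℝ)) atTop atTop :=
        Tendsto.const_mul_atTop (by linarith) tendsto_natCast_atTop_atTop
      have h2 := tendsto_neg_atTop_atBot.comp h1
      refine h2.congr fun n => ?_
      show -((-((1 - (R₁+R₂))/2))*(n:ℝ)) = _
      ring
    exact tendsto_atBot_mono' atTop hev2 hlin
  have t1 : Tendsto (fun n : ℕ => (l:ℝ) ^ (1 + (n:ℝ) - ((n:ℝ)*(R₁+R₂) + e₁ n + e₂ n))) atTop
      (nhds 0) := by
    have hmul : Tendsto (fun n : ℕ => Real.log l * (1 + (n:ℝ) - ((n:ℝ)*(R₁+R₂) + e₁ n + e₂ n)))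
        atTop atBot := Tendsto.const_mul_atBot (Real.log_pos hl1R) hatBot
    have hcomp := Real.tendsto_exp_atBot.comp hmul
    refine hcomp.congr fun n => ?_
    show Real.exp (Real.log l * _) = _
    rw [← Real.rpow_def_of_pos hl0R]
  have t2 : Tendsto (fun n : ℕ => ((l:ℝ) - 1)/((l:ℝ)^n - (l:ℝ))) atTop (nhds 0) := by
    apply Tendsto.div_atTop tendsto_const_nhds
    have h1 := tendsto_pow_atTop_atTop_of_one_lt hl1R
    have h2 := tendsto_atTop_add_const_right atTop (-(l:ℝ)) h1
    refine h2.congr fun n => ?_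
    ring
  have hu : Tendsto u atTop (nhds 0) := by
    rw [hu_def]
    simpa using t1.add t2
  -- squeeze
  apply squeeze_zero' (Filter.Eventually.of_forall ?_) ?_ hu
  · intro n
    positivity
  · filter_upwards [hAfact, hBfact, Filter.eventually_ge_atTop 2] with n hAf hBf hn2
    haveI : Finite ((Fin n → F) ≃ₗ[F] (Fin n → F)) := finite_linearEquiv F (Fin n → F)
    haveI : Fintype ((Fin n → F) ≃ₗ[F] (Fin n → F)) := Fintype.ofFinite _
    have hcardV : Fintype.card (Fin n → F) = l ^ n := by
      rw [Fintype.card_fun, hl, Fintype.card_fin]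
    have hcardVF : Fintype.card F < Fintype.card (Fin n → F) := by
      have h9 : l ^ 1 < l ^ n := Nat.pow_lt_pow_right (by omega : 1 < l) (by omega : 1 < n)
      rw [hcardV, hl]
      simpa using h9
    have hpb := prob_bound (F := F) (V := Fin n → F) (hA0 n) (hB0 n) hAf.1 hBf.1 hcardVF
    -- convert LHS
    have hL : (Nat.card {H : (Fin n → F) ≃ₗ[F] (Fin n → F) //
        A n ∩ (fun v => H v) '' (B n) = ∅} : ℝ) /
          (Nat.card ((Fin n → F) ≃ₗ[F] (Fin n → F)) : ℝ)
        = ((Finset.univ.filter fun H : (Fin n → F) ≃ₗ[F] (Fin n → F) =>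
            A n ∩ (fun v => H v) '' (B n) = ∅).card : ℝ)
          / (Fintype.card ((Fin n → F) ≃ₗ[F] (Fin n → F)) : ℝ) := by
      rw [Nat.card_eq_fintype_card, Nat.card_eq_fintype_card, Fintype.card_subtype]
    rw [hL]
    -- convert set cards in hpb
    have hAc : (((Set.toFinite (A n)).toFinset.card) : ℝ) = ((Nat.card (A n)) : ℝ) := by
      rw [← Set.ncard_eq_toFinset_card, Nat.card_coe_set_eq]
    have hBc : (((Set.toFinite (B n)).toFinset.card) : ℝ) = ((Nat.card (B n)) : ℝ) := by
      rw [← Set.ncard_eq_toFinset_card, Nat.card_coe_set_eq]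
    have hmR : ((Fintype.card (Fin n → F)) : ℝ) = (l:ℝ)^n := by
      rw [hcardV]
      push_cast
      ring
    have hlR : ((Fintype.card F) : ℝ) = (l:ℝ) := by rw [hl]
    rw [hAc, hBc, hmR, hlR] at hpb
    refine hpb.trans ?_
    rw [hu_def]
    apply add_le_add_left
    -- term1 bound
    have hab : ((Nat.card (A n)):ℝ) * ((Nat.card (B n)):ℝ)
        = (l:ℝ)^((n:ℝ)*(R₁+R₂) + e₁ n + e₂ n) := by
      rw [hAf.2, hBf.2, ← Real.rpow_add hl0R]
      congr 1
      ring
    have hnum : (l:ℝ)*((l:ℝ)^n - 1) ≤ (l:ℝ)^(1 + (n:ℝ)) := by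
      rw [Real.rpow_add hl0R, Real.rpow_one, Real.rpow_natCast]
      nlinarith [pow_pos hl0R n]
    have hdenpos : (0:ℝ) < (l:ℝ)^((n:ℝ)*(R₁+R₂) + e₁ n + e₂ n) :=
      Real.rpow_pos_of_pos hl0R _
    calc (l:ℝ) * ((l:ℝ)^n - 1) / (((Nat.card (A n)):ℝ) * ((Nat.card (B n)):ℝ))
        = (l:ℝ) * ((l:ℝ)^n - 1) / ((l:ℝ)^((n:ℝ)*(R₁+R₂) + e₁ n + e₂ n)) := by rw [hab]
      _ ≤ (l:ℝ)^(1 + (n:ℝ)) / ((l:ℝ)^((n:ℝ)*(R₁+R₂) + e₁ n + e₂ n)) := by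
          exact div_le_div_of_nonneg_right hnum hdenpos.le
      _ = (l:ℝ) ^ (1 + (n:ℝ) - ((n:ℝ)*(R₁+R₂) + e₁ n + e₂ n)) := by
          rw [← Real.rpow_sub hl0R]
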